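/- Let G be a group generated by n elements (n ≥ 2) such that for every g in G the twisted conjugacy class [e]_g = {[x,g] : x ∈ G} is a subgroup of G. Then every element of the derived subgroup [G,G] is a product of at most n−1 commutators [a,b] = a⁻¹b⁻¹ab with a, b ∈ G. -/

import Mathlib

open scoped commutatorElement

/-- The twisted conjugacy class of the identity under the inner automorphism
induced by `g`: `[e]_g = {⁅x, g⁆ : x ∈ G}`. -/
def twistedClass {G : Type*} [Group G] (g : G) : Set G :=
  {y : G | ∃ x : G, y = ⁅x, g⁆}

section Aux

variable {G : Type*} [Group G]

open scoped Pointwise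

lemma tc_normal {H : Subgroup G} {g : G} (hH : (H : Set G) = twistedClass g) :
    H.Normal := by
  have hmem : ∀ y : G, ⁅y, g⁆ ∈ H := fun y => by
    rw [← SetLike.mem_coe, hH]; exact ⟨y, rfl⟩
  constructor
  intro a ha b
  have : a ∈ twistedClass g := by rw [← hH]; exact ha
  obtain ⟨y, rfl⟩ := this
  have key : b * ⁅y, g⁆ * b⁻¹ = ⁅b * y, g⁆ * ⁅b, g⁆⁻¹ := by group
  rw [key]
  exact mul_mem (hmem _) (inv_mem (hmem _))

/-- Sup of a family of subgroups indexed by a list. -/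
def NL (f : G → Subgroup G) : List G → Subgroup G
  | [] => ⊥
  | a :: L => f a ⊔ NL f L

lemma NL_normal (f : G → Subgroup G) (hf : ∀ a, (f a).Normal) :
    ∀ L : List G, (NL f L).Normal
  | [] => by simp only [NL]; infer_instance
  | a :: L => by
    have := hf a
    have := NL_normal f hf L
    exact Subgroup.sup_normal _ _

lemma le_NL (f : G → Subgroup G) : ∀ L : List G, ∀ a ∈ L, f a ≤ NL f L
  | a :: L, b, hb => by
    rcases List.mem_cons.mp hb with rfl | hb
    · exact le_sup_left
    · exact le_trans (le_NL f L b hb) le_sup_right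

lemma NL_decomp (f : G → Subgroup G) (hf : ∀ a, (f a).Normal)
    (hc : ∀ a : G, ∀ y ∈ f a, ∃ u v : G, y = ⁅u, v⁆) :
    ∀ L : List G, ∀ g ∈ NL f L, ∃ l : List G, l.length ≤ L.length ∧
      (∀ y ∈ l, ∃ u v : G, y = ⁅u, v⁆) ∧ l.prod = g
  | [], g, hg => ⟨[], by simp, by simp, by simpa [NL, Subgroup.mem_bot] using hg.symm⟩
  | a :: L, g, hg => by
    have hN : (NL f L).Normal := NL_normal f hf L
    have hmul : g ∈ (f a : Set G) * (NL f L : Set G) := by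
      rw [← Subgroup.mul_normal]; exact hg
    obtain ⟨u, hu, v, hv, huv⟩ := hmul
    obtain ⟨l, hl, hlc, hlp⟩ := NL_decomp f hf hc L v hv
    refine ⟨u :: l, by simpa using Nat.succ_le_succ hl, ?_, by simp [hlp, huv]⟩
    intro y hy
    rcases List.mem_cons.mp hy with h1 | h2
    · exact h1 ▸ hc a u hu
    · exact hlc y h2

end Aux

theorem stmt_8 {G : Type*} [Group G] (n : ℕ) (hn : 2 ≤ n) (x : Fin n → G)
    (hgen : Subgroup.closure (Set.range x) = ⊤)
    (h : ∀ g : G, ∃ H : Subgroup G, (H : Set G) = twistedClass g) :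
    ∀ g ∈ commutator G, ∃ l : List G, l.length ≤ n - 1 ∧
      (∀ y ∈ l, ∃ a b : G, y = ⁅a, b⁆) ∧ l.prod = g := by
  choose H hH using h
  have hnorm : ∀ g, (H g).Normal := fun g => tc_normal (hH g)
  have hmem : ∀ g y : G, ⁅y, g⁆ ∈ H g := fun g y => by
    rw [← SetLike.mem_coe, hH]; exact ⟨y, rfl⟩
  have hcomm : ∀ g : G, ∀ y ∈ H g, ∃ u v : G, y = ⁅u, v⁆ := fun g y hy => by
    have : y ∈ twistedClass g := by rw [← hH]; exact hy
    obtain ⟨u, rfl⟩ := this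
    exact ⟨u, g, rfl⟩
  have hcast : n - 1 + 1 = n := by omega
  set j0 : Fin n := ⟨0, by omega⟩ with hj0
  set L : List G := List.ofFn (fun i : Fin (n - 1) => x (Fin.cast hcast i.succ)) with hL
  set N : Subgroup G := NL H L with hNdef
  have hNnorm : N.Normal := NL_normal H hnorm L
  -- every generator with nonzero index has its class inside N
  have hjN : ∀ j : Fin n, j ≠ j0 → H (x j) ≤ N := by
    intro j hj
    apply le_NL
    rw [hL, List.mem_ofFn]
    have hj' : j.val ≠ 0 := fun hc => hj (Fin.ext hc)
    refine ⟨⟨j.val - 1, by omega⟩, ?_⟩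
    show x _ = x j
    have : Fin.cast hcast (Fin.succ ⟨j.val - 1, by omega⟩) = j := by
      apply Fin.ext
      simp
      omega
    rw [this]
  -- quotient argument
  letI : N.Normal := hNnorm
  set mk : G →* G ⧸ N := QuotientGroup.mk' N with hmk
  have hone : ∀ a : G, a ∈ N → mk a = 1 := fun a ha =>
    (QuotientGroup.eq_one_iff a).mpr ha
  have hcent : ∀ j : Fin n, j ≠ j0 → mk (x j) ∈ Subgroup.center (G ⧸ N) := by
    intro j hj
    rw [Subgroup.mem_center_iff]
    intro q
    induction q using QuotientGroup.induction_on with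
    | H a =>
      have h1 : mk ⁅a, x j⁆ = 1 := hone _ (hjN j hj (hmem (x j) a))
      rw [map_commutatorElement] at h1
      exact commutatorElement_eq_one_iff_mul_comm.mp h1
  -- x j0 is central too
  have hall0 : ∀ a : G, mk a ∈ Subgroup.centralizer {mk (x j0)} := by
    intro a
    have hle : Subgroup.closure (Set.range x) ≤
        (Subgroup.centralizer {mk (x j0)}).comap mk := by
      apply (Subgroup.closure_le _).mpr
      rintro _ ⟨j, rfl⟩
      show mk (x j) ∈ Subgroup.centralizer {mk (x j0)}
      by_cases hj : j = j0
      · subst hj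
        rw [Subgroup.mem_centralizer_iff]
        rintro _ rfl
        rfl
      · exact Subgroup.center_le_centralizer _ (hcent j hj)
    have : a ∈ (⊤ : Subgroup G) := trivial
    rw [← hgen] at this
    exact hle this
  have hz : mk (x j0) ∈ Subgroup.center (G ⧸ N) := by
    rw [Subgroup.mem_center_iff]
    intro q
    induction q using QuotientGroup.induction_on with
    | H a =>
      exact (Subgroup.mem_centralizer_iff.mp (hall0 a) (mk (x j0)) rfl).symm
  -- all of G maps into the center, hence N contains all commutators
  have hac : ∀ a : G, mk a ∈ Subgroup.center (G ⧸ N) := by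
    intro a
    have hle : Subgroup.closure (Set.range x) ≤
        (Subgroup.center (G ⧸ N)).comap mk := by
      apply (Subgroup.closure_le _).mpr
      rintro _ ⟨j, rfl⟩
      show mk (x j) ∈ Subgroup.center (G ⧸ N)
      by_cases hj : j = j0
      · subst hj; exact hz
      · exact hcent j hj
    have : a ∈ (⊤ : Subgroup G) := trivial
    rw [← hgen] at this
    exact hle this
  have hcomm_in : ∀ a b : G, ⁅a, b⁆ ∈ N := by
    intro a b
    have h1 : mk ⁅a, b⁆ = 1 := by
      rw [map_commutatorElement]
      exact commutatorElement_eq_one_iff_mul_comm.mpr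
        ((Subgroup.mem_center_iff.mp (hac b) (mk a)))
    exact (QuotientGroup.eq_one_iff _).mp h1
  have hcle : commutator G ≤ N := by
    rw [commutator_def]
    exact Subgroup.commutator_le.mpr fun a _ b _ => hcomm_in a b
  intro g hg
  obtain ⟨l, hl, hlc, hlp⟩ := NL_decomp H hnorm hcomm L g (hcle hg)
  exact ⟨l, by simpa [hL] using hl, hlc, hlp⟩
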